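/- For each codeword x_i with P_X(x_i) > 0, the function J_i(D) = E_{y∼p_Y}[log D(x_i,y)] + P_X(x_i) E_{y∼p_{Y|X}(·|x_i)}[log(1 - D(x_i,y))] is maximized (pointwise in y, a.e. where p_Y(y) > 0) by D*(x_i,y) = p_Y(y) / (p_Y(y) + P_X(x_i) p_{Y|X}(y|x_i)). -/

import Mathlib

open MeasureTheory

lemma gibbs_aux (a b d : ℝ) (ha : 0 < a) (hb : 0 ≤ b) (hd1 : 0 < d) (hd2 : d < 1) :
    a * Real.log d + b * Real.log (1 - d) ≤
      a * Real.log (a / (a + b)) + b * Real.log (1 - a / (a + b)) := by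
  rcases hb.eq_or_lt with hb0 | hb0
  · rw [← hb0]
    simp only [zero_mul, add_zero]
    rw [div_self ha.ne']
    simp only [Real.log_one, mul_zero]
    have := Real.log_nonpos hd1.le hd2.le
    nlinarith
  · have hab : 0 < a + b := by linarith
    have hrw : 1 - a / (a + b) = b / (a + b) := by field_simp; ring
    rw [hrw]
    have k1 : Real.log (d / (a / (a + b))) ≤ d / (a / (a + b)) - 1 :=
      Real.log_le_sub_one_of_pos (by positivity)
    have k2 : Real.log ((1 - d) / (b / (a + b))) ≤ (1 - d) / (b / (a + b)) - 1 :=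
      Real.log_le_sub_one_of_pos (div_pos (by linarith) (by positivity))
    rw [Real.log_div hd1.ne' (by positivity)] at k1
    rw [Real.log_div (by nlinarith) (by positivity)] at k2
    have m1 := mul_le_mul_of_nonneg_left k1 ha.le
    have m2 := mul_le_mul_of_nonneg_left k2 hb0.le
    have e1 : a * (d / (a / (a + b))) = d * (a + b) := by field_simp
    have e2 : b * ((1 - d) / (b / (a + b))) = (1 - d) * (a + b) := by
      field_simp
    nlinarith [m1, m2]

/-- For each codeword `xᵢ` with `P_X(xᵢ) > 0`, the integrand of
`Jᵢ(D) = E_{p_Y}[log D(xᵢ,y)] + P_X(xᵢ) E_{p_{Y|X}(·|xᵢ)}[log(1-D(xᵢ,y))]`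
is maximized pointwise, a.e. where `p_Y(y) > 0`, by
`D*(xᵢ,y) = p_Y(y)/(p_Y(y) + P_X(xᵢ) p_{Y|X}(y|xᵢ))`. -/
theorem stmt_8 {Y : Type*} [MeasurableSpace Y] (ν : Measure Y)
    (pY pcondi : Y → ℝ) (PXi : ℝ) (hPXi : 0 < PXi)
    (hpY : ∀ y, 0 ≤ pY y) (hpcond : ∀ y, 0 ≤ pcondi y) :
    ∀ᵐ y ∂ν, 0 < pY y →
      ∀ d ∈ Set.Ioo (0 : ℝ) 1,
        pY y * Real.log d + PXi * pcondi y * Real.log (1 - d) ≤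
          pY y * Real.log (pY y / (pY y + PXi * pcondi y)) +
            PXi * pcondi y *
              Real.log (1 - pY y / (pY y + PXi * pcondi y)) := by
  filter_upwards with y hy d hd
  exact gibbs_aux _ _ _ hy (mul_nonneg hPXi.le (hpcond y)) hd.1 hd.2
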